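/- Let σ : ℝ → ℝ be real analytic, not equal to any polynomial, and with bounded derivative σ'. Let z_1, …, z_n ∈ ℝ^d be nonzero vectors that are pairwise non-parallel, i.e., for all i ≠ j the vectors z_i and z_j are linearly independent. Then the n×n symmetric matrix G with entries G_{ij} = (∫_{ℝ^d} σ'(⟨w, z_i⟩) σ'(⟨w, z_j⟩) dγ_d(w)) · ⟨z_i, z_j⟩ is positive definite; equivalently, its smallest eigenvalue is strictly positive. -/

import Mathlib

open MeasureTheory ProbabilityTheory
open Filter Topology ContDiff Nat Matrix

/-- The standard Gaussian measure `N(0, I_d)` on `ℝ^d`. -/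
noncomputable def stdGaussian (d : ℕ) : Measure (Fin d → ℝ) :=
  Measure.pi fun _ => gaussianReal 0 1

-- A: Vandermonde-limit lemma
lemma aux_sum_pow {ι : Type*} [DecidableEq ι] (S : Set ℕ) (hS : S.Infinite) :
    ∀ s : Finset ι, ∀ b c : ι → ℝ, (∀ i ∈ s, 0 < b i) → Set.InjOn b s →
      (∀ m ∈ S, ∑ i ∈ s, c i * b i ^ m = 0) → ∀ i ∈ s, c i = 0 := by
  intro s
  induction s using Finset.strongInduction with
  | _ s ih =>
    intro b c hb hinj hsum i hi
    obtain ⟨i₀, hi₀, hmax⟩ := s.exists_max_image b ⟨i, hi⟩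
    have hb0 : 0 < b i₀ := hb _ hi₀
    -- c i₀ = 0
    have hc0 : c i₀ = 0 := by
      set g : ℕ → ℝ := fun m => ∑ j ∈ s, c j * (b j / b i₀) ^ m with hg
      have hgS : ∀ m ∈ S, g m = 0 := by
        intro m hm
        have e1 : g m = (∑ j ∈ s, c j * b j ^ m) / b i₀ ^ m := by
          rw [hg]
          simp only [div_pow]
          rw [Finset.sum_div]
          exact Finset.sum_congr rfl fun j _ => (mul_div_assoc _ _ _).symm
        rw [e1, hsum m hm, zero_div]
      have htend : Tendsto g atTop (𝓝 (c i₀)) := by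
        have : Tendsto g atTop (𝓝 (∑ j ∈ s, if j = i₀ then c i₀ else 0)) := by
          apply tendsto_finset_sum
          intro j hj
          by_cases hji : j = i₀
          · subst hji
            simp only [if_pos rfl, div_self hb0.ne', one_pow, mul_one]
            exact tendsto_const_nhds
          · simp only [if_neg hji]
            have hlt : b j < b i₀ := lt_of_le_of_ne (hmax j hj) (fun h => hji (hinj hj hi₀ h))
            have h0 : (0:ℝ) ≤ b j / b i₀ := le_of_lt (div_pos (hb _ hj) hb0)
            have h1 : |b j / b i₀| < 1 := by
              rw [abs_of_nonneg h0]
              exact (div_lt_one hb0).2 hlt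
            have := (tendsto_pow_atTop_nhds_zero_of_abs_lt_one h1).const_mul (c j)
            simpa using this
        simpa [Finset.sum_ite_eq' s i₀ (fun _ => c i₀), hi₀] using this
      -- subsequence in S
      have hS' : {n | n ∈ S}.Infinite := hS
      have hφ : Tendsto (fun k => Nat.nth (· ∈ S) k) atTop atTop :=
        (Nat.nth_strictMono hS').tendsto_atTop
      have h2 : Tendsto (fun k => g (Nat.nth (· ∈ S) k)) atTop (𝓝 (c i₀)) :=
        htend.comp hφ
      have h3 : (fun k => g (Nat.nth (· ∈ S) k)) = fun _ => (0:ℝ) := by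
        funext k
        exact hgS _ (Nat.nth_mem_of_infinite hS' k)
      rw [h3] at h2
      exact tendsto_nhds_unique h2 tendsto_const_nhds
    by_cases hii : i = i₀
    · rwa [hii]
    · have hsub : s.erase i₀ ⊂ s := Finset.erase_ssubset hi₀
      refine ih _ hsub b c (fun j hj => hb _ (Finset.mem_of_mem_erase hj))
        (hinj.mono (fun j hj => Finset.mem_of_mem_erase hj)) ?_ i
        (Finset.mem_erase.2 ⟨hii, hi⟩)
      intro m hm
      have := hsum m hm
      rwa [← Finset.add_sum_erase _ _ hi₀, hc0, zero_mul, zero_add] at this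

-- zero function iterated deriv
lemma aux_iteratedDeriv_zero_fun : ∀ (k : ℕ) (x : ℝ), iteratedDeriv k (fun _ : ℝ => (0:ℝ)) x = 0 := by
  intro k
  induction k with
  | zero => intro x; simp [iteratedDeriv_zero]
  | succ k ihk =>
    intro x
    rw [iteratedDeriv_succ']
    have : (deriv fun _ : ℝ => (0:ℝ)) = fun _ : ℝ => (0:ℝ) := by
      funext y; simp
    rw [this]
    exact ihk x

-- iterated deriv of finite sum
lemma aux_iteratedDeriv_finset_sum {ι : Type*} (s : Finset ι) :
    ∀ (g : ι → ℝ → ℝ), (∀ i ∈ s, ContDiff ℝ ∞ (g i)) → ∀ (k : ℕ) (x : ℝ),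
      iteratedDeriv k (fun y => ∑ i ∈ s, g i y) x = ∑ i ∈ s, iteratedDeriv k (g i) x := by
  intro g hg k
  induction k generalizing g with
  | zero => intro x; simp [iteratedDeriv_zero]
  | succ k ihk =>
    intro x
    rw [iteratedDeriv_succ']
    have hd : (deriv fun y => ∑ i ∈ s, g i y) = fun y => ∑ i ∈ s, deriv (g i) y := by
      funext y
      exact deriv_fun_sum fun i hi => ((hg i hi).differentiable (by simp)).differentiableAt
    rw [hd, ihk (fun i => deriv (g i))
      (fun i hi => (contDiff_infty_iff_deriv.1 (hg i hi)).2)]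
    exact Finset.sum_congr rfl fun i _ => by rw [← iteratedDeriv_succ']

-- analytic with finitely many nonzero Taylor coefficients at 0 is a polynomial
lemma aux_finite_taylor {f : ℝ → ℝ} (hf : ∀ u, AnalyticAt ℝ f u) (N : ℕ)
    (hD : ∀ k, N ≤ k → iteratedDeriv k f 0 = 0) :
    ∃ p : Polynomial ℝ, ∀ u, f u = p.eval u := by
  obtain ⟨pse, hpse⟩ := hf 0
  obtain ⟨r, hr⟩ := hpse
  set p : Polynomial ℝ := ∑ k ∈ Finset.range N,
      Polynomial.C ((k ! : ℝ)⁻¹ * iteratedDeriv k f 0) * Polynomial.X ^ k with hp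
  have key : ∀ y ∈ EMetric.ball (0:ℝ) r, f y = p.eval y := by
    intro y hy
    have h1 := hr.hasSum_iteratedFDeriv hy
    have h2 : ∀ n : ℕ, (n ! : ℝ)⁻¹ • iteratedFDeriv ℝ n f 0 (fun _ => y)
        = ((n ! : ℝ)⁻¹ * iteratedDeriv n f 0) * y ^ n := by
      intro n
      have e1 : (fun _ : Fin n => y) = fun _ : Fin n => y • (1:ℝ) := by
        funext; simp
      rw [e1, ContinuousMultilinearMap.map_smul_univ]
      rw [← iteratedDeriv_eq_iteratedFDeriv]
      simp [smul_eq_mul]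
      ring
    have h3 : HasSum (fun n => ((n ! : ℝ)⁻¹ * iteratedDeriv n f 0) * y ^ n) (f y) := by
      have := h1
      simp only [h2, zero_add] at this
      exact this
    have h4 : HasSum (fun n => ((n ! : ℝ)⁻¹ * iteratedDeriv n f 0) * y ^ n)
        (∑ k ∈ Finset.range N, ((k ! : ℝ)⁻¹ * iteratedDeriv k f 0) * y ^ k) := by
      apply hasSum_sum_of_ne_finset_zero
      intro k hk
      rw [hD k (by simpa using hk)]
      ring
    rw [h3.unique h4, hp]
    simp [Polynomial.eval_finset_sum]
  have h1 : AnalyticOnNhd ℝ f Set.univ := fun x _ => hf x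
  have h2 : AnalyticOnNhd ℝ (fun y => p.eval y) Set.univ :=
    AnalyticOnNhd.eval_polynomial p
  have hfg : f =ᶠ[𝓝 (0:ℝ)] fun y => p.eval y :=
    Filter.eventually_of_mem (EMetric.ball_mem_nhds 0 hr.r_pos) key
  have := AnalyticOnNhd.eq_of_eventuallyEq h1 h2 hfg
  exact ⟨p, fun u => congrFun this u⟩


-- generic direction
lemma aux_generic {d : ℕ} {m : Type*} [Fintype m] (v : m → (Fin d → ℝ)) (hv : ∀ k, v k ≠ 0) :
    ∃ u : Fin d → ℝ, ∀ k, ∑ t, u t * v k t ≠ 0 := by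
  by_contra h
  push_neg at h
  -- linear functionals
  have hker : ∀ k : m, ∃ s : Submodule ℝ (Fin d → ℝ), s ≠ ⊤ ∧
      {u : Fin d → ℝ | ∑ t, u t * v k t = 0} = ↑s := by
    intro k
    set L : (Fin d → ℝ) →ₗ[ℝ] ℝ :=
      { toFun := fun u => ∑ t, u t * v k t
        map_add' := by intro a b; simp [add_mul, Finset.sum_add_distrib]
        map_smul' := by
          intro a b
          simp [Finset.mul_sum, smul_eq_mul, mul_assoc] } with hL
    refine ⟨LinearMap.ker L, ?_, ?_⟩
    swap
    · ext u
      simp [LinearMap.mem_ker, hL]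
    intro htop
    have hvk : v k ∈ (⊤ : Submodule ℝ (Fin d → ℝ)) := Submodule.mem_top
    rw [← htop, LinearMap.mem_ker] at hvk
    simp only [hL, LinearMap.coe_mk, AddHom.coe_mk] at hvk
    obtain ⟨t, ht⟩ := Function.ne_iff.1 (hv k)
    have hpos : 0 < ∑ t, v k t * v k t := by
      apply Finset.sum_pos' (fun t _ => mul_self_nonneg _)
      exact ⟨t, Finset.mem_univ t, mul_self_pos.mpr ht⟩
    rw [hvk] at hpos
    exact lt_irrefl _ hpos
  have hnull : ∀ k : m, volume {u : Fin d → ℝ | ∑ t, u t * v k t = 0} = 0 := by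
    intro k
    obtain ⟨s, hs, hset⟩ := hker k
    rw [hset]
    exact Measure.addHaar_submodule volume s hs
  have hcover : (Set.univ : Set (Fin d → ℝ)) ⊆ ⋃ k, {u : Fin d → ℝ | ∑ t, u t * v k t = 0} := by
    intro u _
    obtain ⟨k, hk⟩ := h u
    exact Set.mem_iUnion.2 ⟨k, hk⟩
  have h0 : volume (Set.univ : Set (Fin d → ℝ)) = 0 :=
    measure_mono_null hcover (measure_iUnion_null hnull)
  have : (0:ENNReal) < volume (Set.univ : Set (Fin d → ℝ)) :=
    isOpen_univ.measure_pos volume ⟨0, trivial⟩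
  rw [h0] at this
  exact lt_irrefl _ this

instance aux_gaussOpenPos : (gaussianReal 0 1).IsOpenPosMeasure := by
  constructor
  intro U hU hne h0
  have hv : volume U = 0 := gaussianReal_absolutelyContinuous' 0 (by norm_num) h0
  exact (hU.measure_pos volume hne).ne' hv

instance aux_stdGaussOpenPos (d : ℕ) : (stdGaussian d).IsOpenPosMeasure := by
  unfold _root_.stdGaussian
  infer_instance

instance aux_stdGaussProb (d : ℕ) : IsProbabilityMeasure (stdGaussian d) := by
  unfold _root_.stdGaussian
  infer_instance

lemma aux_core (d n : ℕ) (σ : ℝ → ℝ) (hana : ∀ u : ℝ, AnalyticAt ℝ σ u)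
    (hpoly : ¬ ∃ p : Polynomial ℝ, ∀ u : ℝ, σ u = p.eval u)
    (z : Fin n → Fin d → ℝ) (hz : ∀ i, z i ≠ 0)
    (hpar : ∀ i j, i ≠ j → LinearIndependent ℝ ![z i, z j]) (x : Fin n → ℝ)
    (hF : ∀ (t : Fin d) (w : Fin d → ℝ),
      ∑ i, x i * z i t * deriv σ (∑ t', w t' * z i t') = 0) :
    x = 0 := by
  classical
  -- analyticity of deriv σ
  have hana' : ∀ u : ℝ, AnalyticAt ℝ (deriv σ) u := by
    have hOn : AnalyticOnNhd ℝ σ Set.univ := fun y _ => hana y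
    exact fun u => hOn.deriv u (Set.mem_univ u)
  have hσ'cd : ContDiff ℝ ∞ (deriv σ) :=
    contDiff_iff_contDiffAt.mpr fun u => (hana' u).contDiffAt
  have hσ'k : ∀ k : ℕ, ContDiff ℝ k (deriv σ) :=
    fun k => hσ'cd.of_le (by exact_mod_cast le_top)
  -- infinitely many nonzero Taylor coefficients of deriv σ at 0
  set Sset : Set ℕ := {k | iteratedDeriv k (deriv σ) 0 ≠ 0} with hSset
  have hSinf : Sset.Infinite := by
    by_contra hfin
    rw [Set.not_infinite] at hfin
    obtain ⟨N, hN⟩ := hfin.bddAbove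
    apply hpoly
    apply aux_finite_taylor hana (N + 2)
    intro k hk
    obtain ⟨m, rfl⟩ := Nat.exists_eq_add_of_le hk
    have he : N + 2 + m = (N + 1 + m) + 1 := by omega
    rw [he, iteratedDeriv_succ']
    have : N + 1 + m ∉ Sset := by
      intro hmem
      have := hN hmem
      omega
    rwa [hSset, Set.mem_setOf_eq, not_ne_iff] at this
  -- generic direction
  set ι : Type := Fin n ⊕ ({p : Fin n × Fin n // p.1 ≠ p.2} ⊕ {p : Fin n × Fin n // p.1 ≠ p.2})
    with hι
  have hv : ∀ k : ι, (Sum.elim z (Sum.elim (fun p => z p.1.1 - z p.1.2)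
      (fun p => z p.1.1 + z p.1.2)) : ι → Fin d → ℝ) k ≠ 0 := by
    rintro (i | p | p)
    · exact hz i
    · obtain ⟨⟨i, j⟩, hij⟩ := p
      have h2 := (linearIndependent_fin2.mp (hpar i j hij)).2 1
      simp only [one_smul, Matrix.cons_val_one, Matrix.head_cons, Matrix.cons_val_zero] at h2
      simp only [Sum.elim_inr, Sum.elim_inl]
      exact fun h => h2 (by rwa [sub_eq_zero, eq_comm] at h)
    · obtain ⟨⟨i, j⟩, hij⟩ := p
      have h2 := (linearIndependent_fin2.mp (hpar i j hij)).2 (-1)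
      simp only [Matrix.cons_val_one, Matrix.head_cons, Matrix.cons_val_zero] at h2
      simp only [Sum.elim_inr]
      intro h
      exact h2 (by rw [neg_smul, one_smul, neg_eq_iff_add_eq_zero, add_comm]; exact h)
  obtain ⟨u, hu⟩ := aux_generic _ hv
  set a : Fin n → ℝ := fun i => ∑ t, u t * z i t with ha
  have ha0 : ∀ i, a i ≠ 0 := fun i => hu (Sum.inl i)
  have hsub : ∀ i j, i ≠ j → a i - a j ≠ 0 := by
    intro i j hij
    have := hu (Sum.inr (Sum.inl ⟨(i, j), hij⟩))
    simp only [Sum.elim_inr, Sum.elim_inl, Pi.sub_apply, mul_sub] at this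
    rwa [Finset.sum_sub_distrib] at this
  have hadd : ∀ i j, i ≠ j → a i + a j ≠ 0 := by
    intro i j hij
    have := hu (Sum.inr (Sum.inr ⟨(i, j), hij⟩))
    simp only [Sum.elim_inr, Pi.add_apply, mul_add] at this
    rwa [Finset.sum_add_distrib] at this
  have hsq : ∀ i j, i ≠ j → a i ^ 2 ≠ a j ^ 2 := by
    intro i j hij h
    have h1 : (a i - a j) * (a i + a j) = 0 := by ring_nf; linear_combination h
    rcases mul_eq_zero.mp h1 with h2 | h2
    · exact hsub i j hij h2
    · exact hadd i j hij h2
  -- coefficients vanish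
  have hcoef : ∀ (t : Fin d) (k : ℕ), k ∈ Sset → ∑ i, (x i * z i t) * a i ^ k = 0 := by
    intro t k hk
    set f : ℝ → ℝ := fun s => ∑ i, (x i * z i t) * deriv σ (a i * s) with hf
    have hf0 : ∀ s, f s = 0 := by
      intro s
      have harg : ∀ i, (∑ t', (fun t' => s * u t') t' * z i t') = a i * s := by
        intro i
        have : ∀ t' ∈ Finset.univ, (s * u t') * z i t' = s * (u t' * z i t') :=
          fun t' _ => by ring
        rw [Finset.sum_congr rfl this, ← Finset.mul_sum]
        exact mul_comm s (a i)
      have := hF t (fun t' => s * u t')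
      simp only [harg] at this
      exact this
    have hg : ∀ i ∈ Finset.univ, ContDiff ℝ ∞ (fun s => (x i * z i t) * deriv σ (a i * s)) := by
      intro i _
      exact contDiff_const.mul (hσ'cd.comp (contDiff_const.mul contDiff_id))
    have hIter : iteratedDeriv k f 0
        = (∑ i, (x i * z i t) * a i ^ k) * iteratedDeriv k (deriv σ) 0 := by
      rw [hf, aux_iteratedDeriv_finset_sum Finset.univ _ hg k 0]
      rw [Finset.sum_mul]
      refine Finset.sum_congr rfl fun i _ => ?_
      have h1 : iteratedDeriv k (fun s => (x i * z i t) * deriv σ (a i * s)) 0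
          = (x i * z i t) * iteratedDeriv k (fun s => deriv σ (a i * s)) 0 := by
        rw [← iteratedDerivWithin_univ, ← iteratedDerivWithin_univ]
        exact iteratedDerivWithin_const_mul (Set.mem_univ 0) uniqueDiffOn_univ _
          ((hσ'k k).comp (contDiff_const.mul contDiff_id)).contDiffAt.contDiffWithinAt
      rw [h1, iteratedDeriv_comp_const_mul (hσ'k k) (a i)]
      simp only [mul_zero]
      ring
    have hfz : iteratedDeriv k f 0 = 0 := by
      have : f = fun _ => (0:ℝ) := funext hf0
      rw [this]
      exact aux_iteratedDeriv_zero_fun k 0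
    rw [hfz] at hIter
    exact (mul_eq_zero.mp hIter.symm).resolve_right hk
  -- even/odd split
  have hEO : {m : ℕ | 2 * m ∈ Sset}.Infinite ∨ {m : ℕ | 2 * m + 1 ∈ Sset}.Infinite := by
    by_contra hno
    push_neg at hno
    obtain ⟨h1, h2⟩ := hno
    apply hSinf
    have hsubset : Sset ⊆ (fun m => 2 * m) '' {m | 2 * m ∈ Sset}
        ∪ (fun m => 2 * m + 1) '' {m | 2 * m + 1 ∈ Sset} := by
      intro k hk
      rcases Nat.even_or_odd k with ⟨m, hm⟩ | ⟨m, hm⟩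
      · exact Or.inl ⟨m, by rw [Set.mem_setOf_eq, show 2 * m = k by omega]; exact hk,
          by show 2 * m = k; omega⟩
      · exact Or.inr ⟨m, by rw [Set.mem_setOf_eq, show 2 * m + 1 = k by omega]; exact hk,
          by show 2 * m + 1 = k; omega⟩
    exact ((h1.image _).union (h2.image _)).subset hsubset
  -- conclude
  have hxz : ∀ (t : Fin d) (i : Fin n), x i * z i t = 0 := by
    intro t i
    have hbpos : ∀ j ∈ Finset.univ, 0 < (fun j => a j ^ 2) j := by
      intro j _
      simp only [pow_two]
      exact mul_self_pos.mpr (ha0 j)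
    have hbinj : Set.InjOn (fun j => a j ^ 2) (Finset.univ : Finset (Fin n)) := by
      intro i' _ j' _ h
      by_contra hij
      exact hsq i' j' hij h
    rcases hEO with hSe | hSo
    · refine aux_sum_pow _ hSe Finset.univ (fun j => a j ^ 2) (fun j => x j * z j t)
        hbpos hbinj ?_ i (Finset.mem_univ i)
      intro m hm
      have := hcoef t (2 * m) hm
      simpa only [pow_mul] using this
    · have hall := aux_sum_pow _ hSo Finset.univ (fun j => a j ^ 2)
        (fun j => (x j * z j t) * a j) hbpos hbinj ?_ i (Finset.mem_univ i)
      · exact (mul_eq_zero.mp hall).resolve_right (ha0 i)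
      · intro m hm
        have h0 := hcoef t (2 * m + 1) hm
        rw [← h0]
        refine Finset.sum_congr rfl fun j _ => ?_
        ring
  funext i
  by_contra hxi
  refine hz i (funext fun t => ?_)
  exact (mul_eq_zero.mp (hxz t i)).resolve_left hxi

/-- If `σ` is real analytic, not a polynomial, and has bounded derivative `σ'`, and
`z_1, …, z_n ∈ ℝ^d` are nonzero and pairwise non-parallel (linearly independent in pairs),
then the Gram matrix `G_{ij} = (∫ σ'(⟨w, z_i⟩) σ'(⟨w, z_j⟩) dγ_d(w)) ⟨z_i, z_j⟩`
is positive definite. -/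
theorem stmt_7 (d n : ℕ)
    (σ : ℝ → ℝ) (hana : ∀ u : ℝ, AnalyticAt ℝ σ u)
    (hpoly : ¬ ∃ p : Polynomial ℝ, ∀ u : ℝ, σ u = p.eval u)
    (C : ℝ) (hC : ∀ u : ℝ, |deriv σ u| ≤ C)
    (z : Fin n → Fin d → ℝ) (hz : ∀ i, z i ≠ 0)
    (hpar : ∀ i j, i ≠ j → LinearIndependent ℝ ![z i, z j]) :
    (Matrix.of fun i j : Fin n =>
        (∫ w, deriv σ (∑ t, w t * z i t) * deriv σ (∑ t, w t * z j t) ∂stdGaussian d)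
          * (∑ t, z i t * z j t)).PosDef := by
  classical
  set S : Fin n → (Fin d → ℝ) → ℝ := fun i w => deriv σ (∑ t, w t * z i t) with hS
  have hana' : ∀ u : ℝ, AnalyticAt ℝ (deriv σ) u := by
    have hOn : AnalyticOnNhd ℝ σ Set.univ := fun y _ => hana y
    exact fun u => hOn.deriv u (Set.mem_univ u)
  have hσ'cont : Continuous (deriv σ) :=
    continuous_iff_continuousAt.2 fun u => (hana' u).continuousAt
  have hScont : ∀ i, Continuous (S i) := fun i =>
    hσ'cont.comp (continuous_finset_sum _ fun t _ => (continuous_apply t).mul continuous_const)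
  have hC0 : 0 ≤ C := le_trans (abs_nonneg _) (hC 0)
  have hInt : ∀ i j, Integrable (fun w => S i w * S j w) (stdGaussian d) := by
    intro i j
    refine Integrable.mono' (integrable_const (C * C))
      (((hScont i).mul (hScont j)).aestronglyMeasurable) (ae_of_all _ fun w => ?_)
    rw [Real.norm_eq_abs, abs_mul]
    exact mul_le_mul (hC _) (hC _) (abs_nonneg _) hC0
  refine Matrix.PosDef.of_dotProduct_mulVec_pos ?_ ?_
  · -- Hermitian
    apply Matrix.ext
    intro i j
    simp only [Matrix.conjTranspose_apply, Matrix.of_apply, star_trivial]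
    have h1 : (∫ w, S j w * S i w ∂stdGaussian d) = ∫ w, S i w * S j w ∂stdGaussian d := by
      congr 1
      funext w
      ring
    have h2 : (∑ t, z j t * z i t) = ∑ t, z i t * z j t :=
      Finset.sum_congr rfl fun t _ => mul_comm _ _
    rw [h1, h2]
  · intro x hx
    have hstar : star x = x := by
      funext i
      simp
    rw [hstar]
    -- the quadratic form as a sum of integrals of squares
    have step1 : ∀ (t : Fin d) (w : Fin d → ℝ), (∑ i, x i * z i t * S i w)^2
        = ∑ i, ∑ j, (x i * z i t * (x j * z j t)) * (S i w * S j w) := by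
      intro t w
      rw [sq, Finset.sum_mul_sum]
      exact Finset.sum_congr rfl fun i _ => Finset.sum_congr rfl fun j _ => by ring
    have step2 : ∀ t : Fin d, ∫ w, (∑ i, x i * z i t * S i w)^2 ∂stdGaussian d
        = ∑ i, ∑ j, (x i * z i t * (x j * z j t)) * ∫ w, S i w * S j w ∂stdGaussian d := by
      intro t
      simp_rw [step1 t]
      rw [integral_finset_sum _
        (fun i _ => integrable_finset_sum _ (fun j _ => ((hInt i j).const_mul _)))]
      refine Finset.sum_congr rfl fun i _ => ?_
      rw [integral_finset_sum _ (fun j _ => (hInt i j).const_mul _)]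
      exact Finset.sum_congr rfl fun j _ => integral_const_mul _ _
    have key : x ⬝ᵥ ((Matrix.of fun i j : Fin n =>
          (∫ w, S i w * S j w ∂stdGaussian d) * (∑ t, z i t * z j t)) *ᵥ x)
        = ∑ t, ∫ w, (∑ i, x i * z i t * S i w)^2 ∂stdGaussian d := by
      simp_rw [step2]
      rw [dotProduct, Finset.sum_comm]
      refine Finset.sum_congr rfl fun i _ => ?_
      rw [Matrix.mulVec, dotProduct, Finset.mul_sum, Finset.sum_comm]
      refine Finset.sum_congr rfl fun j _ => ?_
      rw [Matrix.of_apply, ← Finset.sum_mul]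
      have h3 : ∑ t, x i * z i t * (x j * z j t)
          = (x i * x j) * ∑ t, z i t * z j t := by
        rw [Finset.mul_sum]
        exact Finset.sum_congr rfl fun t _ => by ring
      rw [h3]
      ring
    rw [key]
    -- positivity
    have hnn : ∀ t ∈ Finset.univ,
        (0:ℝ) ≤ ∫ w, (∑ i, x i * z i t * S i w)^2 ∂stdGaussian d :=
      fun t _ => integral_nonneg fun w => sq_nonneg _
    have hFcont : ∀ t : Fin d, Continuous (fun w => ∑ i, x i * z i t * S i w) := fun t =>
      continuous_finset_sum _ fun i _ => continuous_const.mul (hScont i)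
    have hFint : ∀ t : Fin d,
        Integrable (fun w => (∑ i, x i * z i t * S i w)^2) (stdGaussian d) := by
      intro t
      simp_rw [step1 t]
      exact integrable_finset_sum _
        (fun i _ => integrable_finset_sum _ (fun j _ => ((hInt i j).const_mul _)))
    by_contra hle
    push_neg at hle
    have hsum0 : ∑ t, ∫ w, (∑ i, x i * z i t * S i w)^2 ∂stdGaussian d = 0 :=
      le_antisymm hle (Finset.sum_nonneg hnn)
    have hzero := (Finset.sum_eq_zero_iff_of_nonneg hnn).1 hsum0
    have hFae : ∀ t : Fin d, (fun w => ∑ i, x i * z i t * S i w)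
        = fun _ => (0:ℝ) := by
      intro t
      have h0 := hzero t (Finset.mem_univ t)
      have hae := (integral_eq_zero_iff_of_nonneg_ae
        (ae_of_all _ fun w => sq_nonneg _) (hFint t)).1 h0
      have heq : (fun w => (∑ i, x i * z i t * S i w)^2) = fun _ => (0:ℝ) := by
        rw [← Continuous.ae_eq_iff_eq (stdGaussian d)
          (f := fun w => (∑ i, x i * z i t * S i w)^2) ((hFcont t).pow 2) continuous_const]
        exact hae
      funext w
      have := congrFun heq w
      exact pow_eq_zero_iff (n := 2) (by norm_num) |>.1 this
    have hxzero := aux_core d n σ hana hpoly z hz hpar x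
      (fun t w => congrFun (hFae t) w)
    exact hx hxzero
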